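/- Let B = [b_{i₁,…,i_d}] ∈ ℝ₊^{m₁×⋯×m_d} (d ≥ 2, each m_j ≥ 2) be a nonnegative tensor with no zero slice, and let s_k ∈ ℝ^{m_k}, k ∈ [d], be positive vectors satisfying the compatibility condition. Then there exists a nonnegative tensor A positively diagonally equivalent to B with every (k,i_k)-slice sum equal to s_{k,i_k}, if and only if the restriction f̃ of f̂ to the subspace U(s₁,…,s_d) has a critical point (a point of U(s₁,…,s_d) where the gradient of f̂ is orthogonal to U(s₁,…,s_d)). -/

import Mathlib

lemma fderiv_fhat {d : ℕ} {m : Fin d → ℕ}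
    (B : ((j : Fin d) → Fin (m j)) → ℝ)
    (x v : EuclideanSpace ℝ ((k : Fin d) × Fin (m k))) :
    fderiv ℝ (fun y : EuclideanSpace ℝ ((k : Fin d) × Fin (m k)) =>
      ∑ i : (j : Fin d) → Fin (m j), B i * Real.exp (∑ k : Fin d, y ⟨k, i k⟩)) x v
      = ∑ i : (j : Fin d) → Fin (m j),
          B i * Real.exp (∑ k : Fin d, x ⟨k, i k⟩) * ∑ k : Fin d, v ⟨k, i k⟩ := by
  let L : (((j : Fin d) → Fin (m j))) → (EuclideanSpace ℝ ((k : Fin d) × Fin (m k)) →L[ℝ] ℝ) :=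
    fun i => ∑ k : Fin d, EuclideanSpace.proj (⟨k, i k⟩ : (k : Fin d) × Fin (m k))
  have hLapp : ∀ i (y : EuclideanSpace ℝ ((k : Fin d) × Fin (m k))),
      L i y = ∑ k : Fin d, y ⟨k, i k⟩ := by
    intro i y
    simp [L, ContinuousLinearMap.sum_apply]
  have hder : HasFDerivAt (fun y : EuclideanSpace ℝ ((k : Fin d) × Fin (m k)) =>
      ∑ i : (j : Fin d) → Fin (m j), B i * Real.exp (L i y))
      (∑ i : (j : Fin d) → Fin (m j), (B i * Real.exp (L i x)) • L i) x := by
    apply HasFDerivAt.fun_sum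
    intro i _
    have h1 : HasFDerivAt (fun y => Real.exp (L i y)) (Real.exp (L i x) • L i) x :=
      (L i).hasFDerivAt.exp
    have h2 := h1.const_mul (B i)
    rw [← smul_smul]
    exact h2
  have heq : fderiv ℝ (fun y : EuclideanSpace ℝ ((k : Fin d) × Fin (m k)) =>
      ∑ i : (j : Fin d) → Fin (m j), B i * Real.exp (∑ k : Fin d, y ⟨k, i k⟩)) x
      = ∑ i : (j : Fin d) → Fin (m j), (B i * Real.exp (L i x)) • L i := by
    rw [← hder.fderiv]
    congr 1
    ext y
    simp [hLapp]
  rw [heq]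
  simp only [ContinuousLinearMap.sum_apply, ContinuousLinearMap.smul_apply, hLapp,
    smul_eq_mul]

lemma swap_identity {d : ℕ} {m : Fin d → ℕ}
    (A : ((j : Fin d) → Fin (m j)) → ℝ)
    (v : EuclideanSpace ℝ ((k : Fin d) × Fin (m k))) :
    ∑ i : (j : Fin d) → Fin (m j), A i * ∑ k : Fin d, v ⟨k, i k⟩
      = ∑ k : Fin d, ∑ ik : Fin (m k), v ⟨k, ik⟩ *
          ∑ i ∈ Finset.univ.filter (fun i : (j : Fin d) → Fin (m j) => i k = ik), A i := by
  simp_rw [Finset.mul_sum]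
  rw [Finset.sum_comm]
  congr 1
  ext k
  rw [← Finset.sum_fiberwise Finset.univ (fun i : (j : Fin d) → Fin (m j) => i k)
    (fun i => A i * v ⟨k, i k⟩)]
  congr 1
  ext ik
  apply Finset.sum_congr rfl
  intro i hi
  simp only [Finset.mem_filter] at hi
  rw [hi.2, mul_comm]

theorem tensor_scaling_iff_critical_point {d : ℕ} (hd : 2 ≤ d) {m : Fin d → ℕ}
    (hm : ∀ j, 2 ≤ m j)
    (B : ((j : Fin d) → Fin (m j)) → ℝ)
    (hB : ∀ i, 0 ≤ B i)
    (hslice : ∀ (k : Fin d) (ik : Fin (m k)),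
      ∃ i : (j : Fin d) → Fin (m j), i k = ik ∧ B i ≠ 0)
    (s : (k : Fin d) → Fin (m k) → ℝ) (hs : ∀ k i, 0 < s k i)
    (hcompat : ∀ k l : Fin d, ∑ i, s k i = ∑ i, s l i) :
    (∃ A : ((j : Fin d) → Fin (m j)) → ℝ, (∀ i, 0 ≤ A i) ∧
      (∃ x : (k : Fin d) → Fin (m k) → ℝ, ∀ i, A i = Real.exp (∑ k, x k (i k)) * B i) ∧
      (∀ (k : Fin d) (ik : Fin (m k)),
        ∑ i ∈ Finset.univ.filter (fun i : (j : Fin d) → Fin (m j) => i k = ik), A i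
          = s k ik)) ↔
    (∃ x : EuclideanSpace ℝ ((k : Fin d) × Fin (m k)),
      (∀ k : Fin d, ∑ i : Fin (m k), s k i * x ⟨k, i⟩ = 0) ∧
      ∀ v : EuclideanSpace ℝ ((k : Fin d) × Fin (m k)),
        (∀ k : Fin d, ∑ i : Fin (m k), s k i * v ⟨k, i⟩ = 0) →
        fderiv ℝ (fun y : EuclideanSpace ℝ ((k : Fin d) × Fin (m k)) =>
          ∑ i : (j : Fin d) → Fin (m j), B i * Real.exp (∑ k : Fin d, y ⟨k, i k⟩)) x v
          = 0) := by
  have k0 : Fin d := ⟨0, by omega⟩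
  have hmk0 : 0 < m k0 := by have := hm k0; omega
  set σ : ℝ := ∑ i, s k0 i with hσdef
  have hσk : ∀ k, ∑ i, s k i = σ := fun k => hcompat k k0
  have hσpos : 0 < σ :=
    Finset.sum_pos (fun i _ => hs k0 i) ⟨⟨0, hmk0⟩, Finset.mem_univ _⟩
  constructor
  · rintro ⟨A, hA0, ⟨x, hAx⟩, hsum⟩
    set c : Fin d → ℝ := fun k => (∑ i, s k i * x k i) / σ with hc
    set y : EuclideanSpace ℝ ((k : Fin d) × Fin (m k)) := WithLp.toLp 2 (fun p : (k : Fin d) × Fin (m k) => x p.1 p.2 - c p.1) with hy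
    have hyapp : ∀ (k : Fin d) (i : Fin (m k)), y ⟨k, i⟩ = x k i - c k := fun _ _ => rfl
    refine ⟨y, ?_, ?_⟩
    · intro k
      have h1 : ∑ i : Fin (m k), s k i * (x k i - c k)
          = ∑ i : Fin (m k), s k i * x k i - (∑ i : Fin (m k), s k i) * c k := by
        simp_rw [mul_sub]
        rw [Finset.sum_sub_distrib, Finset.sum_mul]
      simp only [hyapp]
      rw [h1, hσk, hc]
      field_simp
      ring
    · intro v hv
      rw [fderiv_fhat]
      have hAv : ∑ i : (j : Fin d) → Fin (m j), A i * ∑ k : Fin d, v ⟨k, i k⟩ = 0 := by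
        rw [swap_identity]
        apply Finset.sum_eq_zero
        intro k _
        calc ∑ ik : Fin (m k), v ⟨k, ik⟩ *
              ∑ i ∈ Finset.univ.filter (fun i : (j : Fin d) → Fin (m j) => i k = ik), A i
            = ∑ ik : Fin (m k), s k ik * v ⟨k, ik⟩ := by
              apply Finset.sum_congr rfl
              intro ik _
              rw [hsum k ik, mul_comm]
          _ = 0 := hv k
      set C : ℝ := ∑ k : Fin d, c k with hC
      have key : ∀ i : (j : Fin d) → Fin (m j),
          B i * Real.exp (∑ k : Fin d, y ⟨k, i k⟩) * ∑ k : Fin d, v ⟨k, i k⟩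
            = Real.exp (-C) * (A i * ∑ k : Fin d, v ⟨k, i k⟩) := by
        intro i
        have h2 : ∑ k : Fin d, y ⟨k, i k⟩ = (∑ k : Fin d, x k (i k)) - C := by
          simp only [hyapp]
          rw [Finset.sum_sub_distrib]
        rw [h2, hAx i, Real.exp_sub, Real.exp_neg]
        ring
      calc ∑ i : (j : Fin d) → Fin (m j),
            B i * Real.exp (∑ k : Fin d, y ⟨k, i k⟩) * ∑ k : Fin d, v ⟨k, i k⟩
          = ∑ i : (j : Fin d) → Fin (m j),
              Real.exp (-C) * (A i * ∑ k : Fin d, v ⟨k, i k⟩) :=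
            Finset.sum_congr rfl (fun i _ => key i)
        _ = Real.exp (-C) * ∑ i : (j : Fin d) → Fin (m j),
              A i * ∑ k : Fin d, v ⟨k, i k⟩ := by rw [Finset.mul_sum]
        _ = 0 := by rw [hAv, mul_zero]
  · rintro ⟨x, hxU, hcrit⟩
    set A : ((j : Fin d) → Fin (m j)) → ℝ :=
      fun i => Real.exp (∑ k : Fin d, x ⟨k, i k⟩) * B i with hA
    have hA0 : ∀ i, 0 ≤ A i := fun i => mul_nonneg (Real.exp_pos _).le (hB i)
    set r : (k : Fin d) → Fin (m k) → ℝ := fun k ik =>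
      ∑ i ∈ Finset.univ.filter (fun i : (j : Fin d) → Fin (m j) => i k = ik), A i with hr
    set T : ℝ := ∑ i, A i with hT
    have hrT : ∀ k, ∑ ik, r k ik = T :=
      fun k => Finset.sum_fiberwise Finset.univ (fun i : (j : Fin d) → Fin (m j) => i k) A
    have hcrit' : ∀ v : EuclideanSpace ℝ ((k : Fin d) × Fin (m k)),
        (∀ k : Fin d, ∑ i : Fin (m k), s k i * v ⟨k, i⟩ = 0) →
        ∑ k : Fin d, ∑ ik : Fin (m k), v ⟨k, ik⟩ * r k ik = 0 := by
      intro v hv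
      have h := hcrit v hv
      rw [fderiv_fhat] at h
      calc ∑ k : Fin d, ∑ ik : Fin (m k), v ⟨k, ik⟩ * r k ik
          = ∑ i : (j : Fin d) → Fin (m j), A i * ∑ k : Fin d, v ⟨k, i k⟩ :=
            (swap_identity A v).symm
        _ = ∑ i : (j : Fin d) → Fin (m j),
              B i * Real.exp (∑ k : Fin d, x ⟨k, i k⟩) * ∑ k : Fin d, v ⟨k, i k⟩ := by
            apply Finset.sum_congr rfl
            intro i _
            rw [hA]
            ring
        _ = 0 := h
    have hden : ∀ k, 0 < ∑ i : Fin (m k), (s k i) ^ 2 :=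
      fun k => Finset.sum_pos (fun i _ => pow_pos (hs k i) 2)
        ⟨⟨0, by have := hm k; omega⟩, Finset.mem_univ _⟩
    set lam : Fin d → ℝ := fun k => (∑ i, s k i * r k i) / (∑ i, (s k i) ^ 2) with hlam
    set w : EuclideanSpace ℝ ((k : Fin d) × Fin (m k)) :=
      WithLp.toLp 2 (fun p : (k : Fin d) × Fin (m k) => r p.1 p.2 - lam p.1 * s p.1 p.2) with hw
    have hwapp : ∀ (k : Fin d) (i : Fin (m k)), w ⟨k, i⟩ = r k i - lam k * s k i :=
      fun _ _ => rfl
    have hwU : ∀ k : Fin d, ∑ i : Fin (m k), s k i * w ⟨k, i⟩ = 0 := by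
      intro k
      simp only [hwapp]
      have h1 : ∑ i : Fin (m k), s k i * (r k i - lam k * s k i)
          = ∑ i : Fin (m k), s k i * r k i - lam k * ∑ i : Fin (m k), (s k i) ^ 2 := by
        simp_rw [mul_sub]
        rw [Finset.sum_sub_distrib, Finset.mul_sum]
        congr 1
        apply Finset.sum_congr rfl
        intros
        ring
      rw [h1, hlam]
      rw [div_mul_cancel₀ _ (hden k).ne', sub_self]
    have h0 := hcrit' w hwU
    have hexp : ∀ k : Fin d, ∑ i : Fin (m k), w ⟨k, i⟩ * r k i
        = ∑ i : Fin (m k), (w ⟨k, i⟩) ^ 2 := by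
      intro k
      have h1 : ∑ i : Fin (m k), w ⟨k, i⟩ * r k i
          = ∑ i : Fin (m k), ((w ⟨k, i⟩) ^ 2 + lam k * (s k i * w ⟨k, i⟩)) := by
        apply Finset.sum_congr rfl
        intro i _
        rw [hwapp]
        ring
      rw [h1, Finset.sum_add_distrib, ← Finset.mul_sum, hwU k, mul_zero, add_zero]
    have hsq0 : ∑ k : Fin d, ∑ i : Fin (m k), (w ⟨k, i⟩) ^ 2 = 0 := by
      rw [← h0]
      exact Finset.sum_congr rfl (fun k _ => (hexp k).symm)
    have hw0 : ∀ (k : Fin d) (i : Fin (m k)), w ⟨k, i⟩ = 0 := by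
      intro k i
      have houter := (Finset.sum_eq_zero_iff_of_nonneg
        (fun k _ => Finset.sum_nonneg (fun i _ => sq_nonneg (w ⟨k, i⟩)))).mp hsq0
      have hinner := (Finset.sum_eq_zero_iff_of_nonneg
        (fun i _ => sq_nonneg (w ⟨k, i⟩))).mp (houter k (Finset.mem_univ k))
      exact pow_eq_zero_iff (two_ne_zero) |>.mp (hinner i (Finset.mem_univ i))
    have hrs : ∀ (k : Fin d) (i : Fin (m k)), r k i = lam k * s k i := by
      intro k i
      have := hw0 k i
      rw [hwapp] at this
      linarith
    obtain ⟨i0, hi0k, hi0⟩ := hslice k0 ⟨0, hmk0⟩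
    have hTpos : 0 < T := by
      have hApos : 0 < A i0 :=
        mul_pos (Real.exp_pos _) (lt_of_le_of_ne (hB i0) (Ne.symm hi0))
      exact lt_of_lt_of_le hApos (Finset.single_le_sum (fun i _ => hA0 i) (Finset.mem_univ i0))
    have hlamT : ∀ k, lam k * σ = T := by
      intro k
      have h1 : ∑ ik : Fin (m k), r k ik = lam k * σ := by
        rw [← hσk k, Finset.mul_sum]
        exact Finset.sum_congr rfl (fun i _ => hrs k i)
      rw [← h1, hrT k]
    set lam0 : ℝ := T / σ with hlam0
    have hlam0pos : 0 < lam0 := div_pos hTpos hσpos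
    have hlamk : ∀ k, lam k = lam0 := by
      intro k
      rw [hlam0, eq_div_iff hσpos.ne']
      exact hlamT k
    refine ⟨fun i => A i / lam0, fun i => div_nonneg (hA0 i) hlam0pos.le,
      ⟨fun k i => x ⟨k, i⟩ - if k = k0 then Real.log lam0 else 0, ?_⟩, ?_⟩
    · intro i
      have hsum' : ∑ k : Fin d, (x ⟨k, i k⟩ - if k = k0 then Real.log lam0 else 0)
          = (∑ k : Fin d, x ⟨k, i k⟩) - Real.log lam0 := by
        rw [Finset.sum_sub_distrib]
        congr 1
        simp
      rw [hsum', Real.exp_sub, Real.exp_log hlam0pos, hA]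
      ring
    · intro k ik
      rw [← Finset.sum_div]
      have : (∑ i ∈ Finset.univ.filter (fun i : (j : Fin d) → Fin (m j) => i k = ik), A i)
          = r k ik := rfl
      rw [this, hrs k ik, hlamk k]
      field_simp
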